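/- arXiv:1609.06698 — 5 statements merged into one kernel-verified Lean document; each statement's English description precedes it below -/
import Mathlib

section
/- Let X be a metric space, ρ a sublinear function with ρ(r)/r nonincreasing, and γ ⊆ X a (ρ,1)-contracting subset. Suppose h : [0,1] → X is a path with d(h(s), γ) ≥ K for all s, whose endpoints x₀ = h(0), x₁ = h(1) satisfy d(x₀, γ) = d(x₁, γ) = K, where K > 0. Let |h| = d(x₀, x₁) and ‖h‖ be the arclength of h. Then ρ(K)/K ≥ (|h| − (2K + ρ(K))) / ‖h‖. -/
open Filter

/-- The ε-closest point projection onto a subset. -/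
def EpsProj {X : Type*} [MetricSpace X] (Y : Set X) (ε : ℝ) (x : X) : Set X :=
  {y ∈ Y | dist x y ≤ Metric.infDist x Y + ε}

/-- A subset Y is (ρ, ε)-contracting: whenever d(x,x') ≤ d(x,Y), the diameter of
π_Y^ε(x) ∪ π_Y^ε(x') is at most ρ(d(x,Y)). -/
def IsContracting {X : Type*} [MetricSpace X] (ρ : ℝ → ℝ) (ε : ℝ) (Y : Set X) : Prop :=
  ∀ x x' : X, dist x x' ≤ Metric.infDist x Y →
    Metric.diam (EpsProj Y ε x ∪ EpsProj Y ε x') ≤ ρ (Metric.infDist x Y)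

/-- If γ is a (ρ,1)-contracting subset for a sublinear ρ with ρ(r)/r
nonincreasing, and h : [0,1] → X is a path staying at distance ≥ K from γ whose
endpoints are at distance exactly K > 0 from γ, then
ρ(K)/K ≥ (|h| − (2K + ρ(K))) / ‖h‖. -/
theorem stmt_4 {X : Type*} [MetricSpace X] (ρ : ℝ → ℝ)
    (hmono : Monotone ρ) (hev : ∀ᶠ r in atTop, 0 ≤ ρ r)
    (hlim : Tendsto (fun r => ρ r / r) atTop (nhds 0))
    (hratio : AntitoneOn (fun r => ρ r / r) (Set.Ioi 0))
    (γ : Set X) (hγ : γ.Nonempty) (hcontr : IsContracting ρ 1 γ)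
    (K : ℝ) (hK : 0 < K)
    (h : ℝ → X) (hcont : ContinuousOn h (Set.Icc 0 1))
    (hfar : ∀ s ∈ Set.Icc (0:ℝ) 1, K ≤ Metric.infDist (h s) γ)
    (h0 : Metric.infDist (h 0) γ = K) (h1 : Metric.infDist (h 1) γ = K) :
    ρ K / K ≥
      (dist (h 0) (h 1) - (2 * K + ρ K)) / (eVariationOn h (Set.Icc 0 1)).toReal := by
  classical
  have zero_mem : (0:ℝ) ∈ Set.Icc (0:ℝ) 1 := ⟨le_refl 0, zero_le_one⟩
  have one_mem : (1:ℝ) ∈ Set.Icc (0:ℝ) 1 := ⟨zero_le_one, le_refl 1⟩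
  -- EpsProj sets are nonempty and bounded
  have hne : ∀ x : X, (EpsProj γ 1 x).Nonempty := by
    intro x
    obtain ⟨y, hy, hxy⟩ := (Metric.infDist_lt_iff hγ).1
      (lt_add_of_pos_right (Metric.infDist x γ) one_pos)
    exact ⟨y, hy, hxy.le⟩
  have hbd : ∀ x : X, Bornology.IsBounded (EpsProj γ 1 x) := by
    intro x
    have hsub : EpsProj γ 1 x ⊆ Metric.closedBall x (Metric.infDist x γ + 1) := by
      rintro y ⟨_, hxy⟩
      exact Metric.mem_closedBall.2 (by rwa [dist_comm])
    exact Metric.isBounded_closedBall.subset hsub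
  -- ρ K ≥ 0
  have hρK : 0 ≤ ρ K := by
    have hc := hcontr (h 0) (h 0) (by rw [dist_self]; exact Metric.infDist_nonneg)
    rw [h0] at hc
    exact le_trans Metric.diam_nonneg hc
  have hρdiv : 0 ≤ ρ K / K := div_nonneg hρK hK.le
  -- sublinearity comparison
  have hlin : ∀ r : ℝ, K ≤ r → ρ r ≤ ρ K / K * r := by
    intro r hr
    have hr0 : 0 < r := hK.trans_le hr
    have hmr := hratio (Set.mem_Ioi.2 hK) (Set.mem_Ioi.2 hr0) hr
    calc ρ r = ρ r / r * r := by field_simp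
    _ ≤ ρ K / K * r := mul_le_mul_of_nonneg_right hmr hr0.le
  -- direct step: when h a is close enough to h 1
  have direct : ∀ a ∈ Set.Icc (0:ℝ) 1, dist (h a) (h 1) ≤ Metric.infDist (h a) γ →
      ∀ p ∈ EpsProj γ 1 (h a), ∀ q ∈ EpsProj γ 1 (h 1),
        dist p q ≤ ρ K / K * (dist (h a) (h 1) + K) := by
    intro a ha hd p hp q hq
    have hKa := hfar a ha
    have hdiam := hcontr (h a) (h 1) hd
    have hbd2 : Bornology.IsBounded (EpsProj γ 1 (h a) ∪ EpsProj γ 1 (h 1)) :=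
      (hbd _).union (hbd _)
    have h1' : dist p q ≤ ρ (Metric.infDist (h a) γ) :=
      le_trans (Metric.dist_le_diam_of_mem hbd2 (Or.inl hp) (Or.inr hq)) hdiam
    have h2' : Metric.infDist (h a) γ ≤ dist (h a) (h 1) + K := by
      calc Metric.infDist (h a) γ ≤ Metric.infDist (h 1) γ + dist (h a) (h 1) :=
        Metric.infDist_le_infDist_add_dist
      _ = dist (h a) (h 1) + K := by rw [h1]; ring
    calc dist p q ≤ ρ (Metric.infDist (h a) γ) := h1'
    _ ≤ ρ K / K * Metric.infDist (h a) γ := hlin _ hKa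
    _ ≤ ρ K / K * (dist (h a) (h 1) + K) := mul_le_mul_of_nonneg_left h2' hρdiv
  -- main case split on total variation
  rcases eq_or_lt_of_le (ENNReal.toReal_nonneg :
      (0:ℝ) ≤ (eVariationOn h (Set.Icc 0 1)).toReal) with hV0 | hVpos
  · rw [ge_iff_le, ← hV0, div_zero]
    exact hρdiv
  · set V : ℝ := (eVariationOn h (Set.Icc 0 1)).toReal with hVdef
    have hfin : eVariationOn h (Set.Icc 0 1) ≠ ⊤ := by
      intro ht
      rw [hVdef, ht] at hVpos
      simp at hVpos
    have hbv : LocallyBoundedVariationOn h (Set.Icc 0 1) := fun a b _ _ =>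
      ne_top_of_le_ne_top hfin (eVariationOn.mono h Set.inter_subset_left)
    have dist_le_var : ∀ a b : ℝ, a ∈ Set.Icc (0:ℝ) 1 → b ∈ Set.Icc (0:ℝ) 1 → a ≤ b →
        dist (h a) (h b) ≤ variationOnFromTo h (Set.Icc 0 1) a b := by
      intro a b ha hb hab
      rw [variationOnFromTo.eq_of_le h _ hab, dist_edist]
      have hfin' : eVariationOn h (Set.Icc 0 1 ∩ Set.Icc a b) ≠ ⊤ :=
        ne_top_of_le_ne_top hfin (eVariationOn.mono h Set.inter_subset_left)
      exact (ENNReal.toReal_le_toReal (edist_ne_top _ _) hfin').2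
        (eVariationOn.edist_le h ⟨ha, le_refl a, hab⟩ ⟨hb, hab, le_refl b⟩)
    -- the key induction
    have key : ∀ n : ℕ, ∀ a, a ∈ Set.Icc (0:ℝ) 1 →
        variationOnFromTo h (Set.Icc 0 1) a 1 ≤ n * K →
        ∀ p ∈ EpsProj γ 1 (h a), ∀ q ∈ EpsProj γ 1 (h 1),
          dist p q ≤ ρ K / K * (variationOnFromTo h (Set.Icc 0 1) a 1 + K) := by
      intro n
      induction n with
      | zero =>
        intro a ha hVa p hp q hq
        have hVa0 : variationOnFromTo h (Set.Icc 0 1) a 1 = 0 :=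
          le_antisymm (by simpa using hVa) (variationOnFromTo.nonneg_of_le h _ ha.2)
        have hdle := dist_le_var a 1 ha one_mem ha.2
        rw [hVa0] at hdle
        have hdd : dist (h a) (h 1) = 0 := le_antisymm hdle dist_nonneg
        have hd : dist (h a) (h 1) ≤ Metric.infDist (h a) γ := by
          rw [hdd]; exact le_trans hK.le (hfar a ha)
        calc dist p q ≤ ρ K / K * (dist (h a) (h 1) + K) := direct a ha hd p hp q hq
        _ = ρ K / K * (variationOnFromTo h (Set.Icc 0 1) a 1 + K) := by rw [hdd, hVa0]
      | succ n ih =>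
        intro a ha hVa p hp q hq
        set r := Metric.infDist (h a) γ with hrdef
        have hKr : K ≤ r := hfar a ha
        have hr0 : 0 < r := hK.trans_le hKr
        by_cases hcase : dist (h a) (h 1) ≤ r
        · have hble := dist_le_var a 1 ha one_mem ha.2
          calc dist p q ≤ ρ K / K * (dist (h a) (h 1) + K) := direct a ha hcase p hp q hq
          _ ≤ ρ K / K * (variationOnFromTo h (Set.Icc 0 1) a 1 + K) :=
            mul_le_mul_of_nonneg_left (by linarith) hρdiv
        · push_neg at hcase
          set S : Set ℝ := {t | t ∈ Set.Icc a 1 ∧ ∀ u ∈ Set.Icc a t, dist (h a) (h u) ≤ r}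
            with hSdef
          have haS : a ∈ S := ⟨⟨le_refl a, ha.2⟩, fun u hu => by
            have hua : u = a := le_antisymm hu.2 hu.1
            rw [hua, dist_self]; exact hr0.le⟩
          have hSbdd : BddAbove S := ⟨1, fun t ht => ht.1.2⟩
          set b := sSup S with hbdef
          have hab : a ≤ b := le_csSup hSbdd haS
          have hb1 : b ≤ 1 := csSup_le ⟨a, haS⟩ (fun t ht => ht.1.2)
          have hbmem : b ∈ Set.Icc (0:ℝ) 1 := ⟨ha.1.trans hab, hb1⟩
          have hlt : ∀ u, a ≤ u → u < b → dist (h a) (h u) ≤ r := by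
            intro u hau hub
            obtain ⟨t, htS, hut⟩ := exists_lt_of_lt_csSup ⟨a, haS⟩ hub
            exact htS.2 u ⟨hau, hut.le⟩
          -- distance bound at b by continuity from the left
          have hdb : dist (h a) (h b) ≤ r := by
            rcases eq_or_lt_of_le hab with heq | hab'
            · rw [← heq, dist_self]; exact hr0.le
            · have hsub : Set.Ico a b ⊆ Set.Icc (0:ℝ) 1 := fun u hu =>
                ⟨ha.1.trans hu.1, hu.2.le.trans hb1⟩
              have htend : Tendsto (fun u => dist (h a) (h u)) (nhdsWithin b (Set.Ico a b))
                  (nhds (dist (h a) (h b))) :=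
                (Tendsto.dist tendsto_const_nhds
                  ((hcont b hbmem).mono hsub |>.mono_left (nhdsWithin_mono b (fun u hu => hu))))
              haveI hne2 : (nhdsWithin b (Set.Ico a b)).NeBot := by
                rw [← mem_closure_iff_nhdsWithin_neBot, closure_Ico hab'.ne]
                exact ⟨hab, le_refl b⟩
              exact le_of_tendsto htend
                (Filter.Eventually.mono eventually_mem_nhdsWithin
                  (fun u hu => hlt u hu.1 hu.2))
          have hblt : b < 1 := by
            rcases lt_or_eq_of_le hb1 with hlt' | heq
            · exact hlt'
            · exfalso; rw [heq] at hdb; exact absurd hdb (not_le.2 hcase)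
          -- d(h a, h b) = r
          have hdeq : dist (h a) (h b) = r := by
            by_contra hne'
            have hdblt : dist (h a) (h b) < r := lt_of_le_of_ne hdb hne'
            have hcw : Tendsto (fun u => dist (h a) (h u)) (nhdsWithin b (Set.Icc (0:ℝ) 1))
                (nhds (dist (h a) (h b))) :=
              Tendsto.dist tendsto_const_nhds (hcont b hbmem)
            have hev2 : {u | dist (h a) (h u) < r} ∈ nhdsWithin b (Set.Icc (0:ℝ) 1) :=
              hcw.eventually_lt_const hdblt
            obtain ⟨ε, hε, hball⟩ := Metric.mem_nhdsWithin_iff.1 hev2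
            set t := min 1 (b + ε / 2) with htdef
            have hbt : b < t := lt_min hblt (by linarith)
            have htmem : t ∈ S := by
              refine ⟨⟨hab.trans hbt.le, min_le_left _ _⟩, ?_⟩
              intro u hu
              rcases le_or_gt u b with hub | hub
              · rcases lt_or_eq_of_le hub with hub' | hub'
                · exact hlt u hu.1 hub'
                · rw [hub']; exact hdb
              · have humem : u ∈ Metric.ball b ε ∩ Set.Icc (0:ℝ) 1 := by
                  constructor
                  · rw [Metric.mem_ball, Real.dist_eq, abs_of_pos (by linarith)]
                    have : u ≤ b + ε / 2 := hu.2.trans (min_le_right _ _)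
                    linarith
                  · exact ⟨ha.1.trans hu.1, hu.2.trans (min_le_left _ _)⟩
                exact (hball humem).le
            exact absurd (le_csSup hSbdd htmem) (not_le.2 hbt)
          -- progress in variation
          have hvab : r ≤ variationOnFromTo h (Set.Icc 0 1) a b := by
            rw [← hdeq]; exact dist_le_var a b ha hbmem hab
          have hadd : variationOnFromTo h (Set.Icc 0 1) a b +
              variationOnFromTo h (Set.Icc 0 1) b 1 = variationOnFromTo h (Set.Icc 0 1) a 1 :=
            variationOnFromTo.add hbv ha hbmem one_mem
          have hVb : variationOnFromTo h (Set.Icc 0 1) b 1 ≤ n * K := by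
            push_cast at hVa
            have : K ≤ variationOnFromTo h (Set.Icc 0 1) a b := hKr.trans hvab
            linarith
          obtain ⟨pb, hpb⟩ := hne (h b)
          -- first hop
          have hhop : dist p pb ≤ ρ K / K * variationOnFromTo h (Set.Icc 0 1) a b := by
            have hdiam := hcontr (h a) (h b) (le_of_eq hdeq)
            have hbd2 : Bornology.IsBounded (EpsProj γ 1 (h a) ∪ EpsProj γ 1 (h b)) :=
              (hbd _).union (hbd _)
            calc dist p pb ≤ ρ r :=
              le_trans (Metric.dist_le_diam_of_mem hbd2 (Or.inl hp) (Or.inr hpb)) hdiam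
            _ ≤ ρ K / K * r := hlin _ hKr
            _ ≤ ρ K / K * variationOnFromTo h (Set.Icc 0 1) a b :=
              mul_le_mul_of_nonneg_left hvab hρdiv
          have hrest := ih b hbmem hVb pb hpb q hq
          calc dist p q ≤ dist p pb + dist pb q := dist_triangle _ _ _
          _ ≤ ρ K / K * variationOnFromTo h (Set.Icc 0 1) a b +
              ρ K / K * (variationOnFromTo h (Set.Icc 0 1) b 1 + K) := add_le_add hhop hrest
          _ = ρ K / K * (variationOnFromTo h (Set.Icc 0 1) a 1 + K) := by
            rw [← mul_add]; congr 1; linarith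
    -- identify V with variationOnFromTo
    have hVeq : variationOnFromTo h (Set.Icc 0 1) 0 1 = V := by
      rw [variationOnFromTo.eq_of_le h _ zero_le_one, Set.inter_self]
    -- main estimate: for every ε > 0
    have hmain : dist (h 0) (h 1) ≤ 2 * K + ρ K + ρ K / K * V := by
      refine le_of_forall_pos_le_add ?_
      intro ε hε
      set δ := min (ε / 2) 1 with hδdef
      have hδ0 : 0 < δ := lt_min (by linarith) one_pos
      have hδ1 : δ ≤ 1 := min_le_right _ _
      obtain ⟨p, hpγ, hp⟩ := (Metric.infDist_lt_iff hγ).1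
        (show Metric.infDist (h 0) γ < K + δ by rw [h0]; linarith)
      obtain ⟨q, hqγ, hq⟩ := (Metric.infDist_lt_iff hγ).1
        (show Metric.infDist (h 1) γ < K + δ by rw [h1]; linarith)
      have hpP : p ∈ EpsProj γ 1 (h 0) := ⟨hpγ, by rw [h0]; linarith⟩
      have hqP : q ∈ EpsProj γ 1 (h 1) := ⟨hqγ, by rw [h1]; linarith⟩
      have hn : variationOnFromTo h (Set.Icc 0 1) 0 1 ≤ (⌈V / K⌉₊ : ℝ) * K := by
        rw [hVeq]
        calc V = V / K * K := by field_simp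
        _ ≤ (⌈V / K⌉₊ : ℝ) * K := mul_le_mul_of_nonneg_right (Nat.le_ceil _) hK.le
      have hkey := key ⌈V / K⌉₊ 0 zero_mem hn p hpP q hqP
      rw [hVeq] at hkey
      have hexp : ρ K / K * (V + K) = ρ K / K * V + ρ K := by
        rw [mul_add, div_mul_cancel₀ _ hK.ne']
      calc dist (h 0) (h 1) ≤ dist (h 0) p + dist p q + dist q (h 1) := dist_triangle4 _ _ _ _
      _ ≤ (K + δ) + (ρ K / K * V + ρ K) + (K + δ) := by
        have hq' : dist q (h 1) < K + δ := by rw [dist_comm]; exact hq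
        rw [← hexp]
        exact add_le_add (add_le_add hp.le hkey) hq'.le
      _ ≤ 2 * K + ρ K + ρ K / K * V + ε := by
        have : δ ≤ ε / 2 := min_le_left _ _
        linarith
    rw [ge_iff_le, div_le_iff₀ hVpos]
    calc dist (h 0) (h 1) - (2 * K + ρ K) ≤ ρ K / K * V := by linarith
    _ = ρ K / K * (eVariationOn h (Set.Icc 0 1)).toReal := by rw [hVdef]
end

section
/- Let H ≤ L ≤ G be groups with H and L finitely generated and G finitely generated. If H is stable in L and L is stable in G, then H is stable in G. -/
/-- The word metric on a group G associated with a generating set S: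
the distance between g and h is the least length of a word in S ∪ S⁻¹
representing g⁻¹h. -/
noncomputable def WordDist {G : Type*} [Group G] (S : Set G) (g h : G) : ℝ :=
  sInf {r : ℝ | ∃ l : List G, (∀ x ∈ l, x ∈ S ∨ x⁻¹ ∈ S) ∧ g⁻¹ * h = l.prod ∧
    r = l.length}

/-- A (κ,κ)-quasigeodesic segment defined on [0,T], with respect to a distance
function d. -/
def IsQG {A : Type*} (d : A → A → ℝ) (κ T : ℝ) (q : ℝ → A) : Prop :=
  ∀ s ∈ Set.Icc 0 T, ∀ t ∈ Set.Icc 0 T,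
    κ⁻¹ * |s - t| - κ ≤ d (q s) (q t) ∧ d (q s) (q t) ≤ κ * |s - t| + κ

/-- A subset Y of (A, d) is stable: for every κ ≥ 1 there is D ≥ 0 such that any
two (κ,κ)-quasigeodesics with the same endpoints lying in Y are D-Hausdorff close. -/
def StableSubset {A : Type*} (d : A → A → ℝ) (Y : Set A) : Prop :=
  ∀ κ : ℝ, 1 ≤ κ → ∃ D : ℝ, 0 ≤ D ∧
    ∀ (T T' : ℝ) (q q' : ℝ → A), 0 ≤ T → 0 ≤ T' →
      IsQG d κ T q → IsQG d κ T' q' →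
      q 0 = q' 0 → q T = q' T' → q 0 ∈ Y → q T ∈ Y →
      (∀ s ∈ Set.Icc 0 T, ∃ t ∈ Set.Icc 0 T', d (q s) (q' t) ≤ D) ∧
      (∀ t ∈ Set.Icc 0 T', ∃ s ∈ Set.Icc 0 T, d (q s) (q' t) ≤ D)

/-- A quasi-isometric embedding between sets with distance functions. -/
def QIEmb {A B : Type*} (dA : A → A → ℝ) (dB : B → B → ℝ) (f : A → B) : Prop :=
  ∃ κ lam : ℝ, 1 ≤ κ ∧ 0 ≤ lam ∧ ∀ a a' : A,
    κ⁻¹ * dA a a' - lam ≤ dB (f a) (f a') ∧ dB (f a) (f a') ≤ κ * dA a a' + lam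

/-- A subgroup H of G (with word metric from S, and H carrying the word metric from
TH) is stable: H is undistorted in G and is a stable subset of G. -/
def StableSubgroup {G : Type*} [Group G] (S : Set G) (H : Subgroup G)
    (TH : Set H) : Prop :=
  QIEmb (WordDist TH) (WordDist S) (fun h : H => (h : G)) ∧
    StableSubset (WordDist S) (H : Set G)

section Aux

variable {A : Type*} {B : Type*} [Group A] [Group B]

lemma word_exists {T : Set B} (hT : Subgroup.closure T = ⊤) (b : B) :
    ∃ l : List B, (∀ y ∈ l, y ∈ T ∨ y⁻¹ ∈ T) ∧ b = l.prod := by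
  have hb : b ∈ Subgroup.closure T := hT ▸ Subgroup.mem_top b
  induction hb using Subgroup.closure_induction with
  | mem x hx => exact ⟨[x], by simp [hx], by simp⟩
  | one => exact ⟨[], by simp, by simp⟩
  | mul x y hx hy ihx ihy =>
      obtain ⟨l1, h1, e1⟩ := ihx
      obtain ⟨l2, h2, e2⟩ := ihy
      refine ⟨l1 ++ l2, ?_, by simp [e1, e2]⟩
      intro z hz
      rcases List.mem_append.mp hz with h | h
      exacts [h1 z h, h2 z h]
  | inv x hx ih =>
      obtain ⟨l, hl, e⟩ := ih
      refine ⟨(l.map fun x => x⁻¹).reverse, ?_, ?_⟩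
      · intro z hz
        simp only [List.mem_reverse, List.mem_map] at hz
        obtain ⟨w, hw, rfl⟩ := hz
        rcases hl w hw with h | h
        · exact Or.inr (by simpa)
        · exact Or.inl h
      · rw [e, List.prod_inv_reverse]

lemma wordDist_nonneg (S : Set B) (g h : B) : 0 ≤ WordDist S g h :=
  Real.sInf_nonneg (by rintro r ⟨l, -, -, rfl⟩; positivity)

lemma wordDist_le {S : Set B} {g h : B} {l : List B}
    (hl : ∀ y ∈ l, y ∈ S ∨ y⁻¹ ∈ S) (he : g⁻¹ * h = l.prod) :
    WordDist S g h ≤ l.length :=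
  csInf_le ⟨0, by rintro r ⟨l', -, -, rfl⟩; positivity⟩ ⟨l, hl, he, rfl⟩

lemma wordDist_lipschitz (f : A →* B) {S : Set A} {T : Set B} {C : ℝ}
    (hSgen : Subgroup.closure S = (⊤ : Subgroup A)) (hC1 : 1 ≤ C)
    (hC : ∀ x : A, (x ∈ S ∨ x⁻¹ ∈ S) → ∃ l : List B,
      (∀ y ∈ l, y ∈ T ∨ y⁻¹ ∈ T) ∧ f x = l.prod ∧ (l.length : ℝ) ≤ C)
    (a a' : A) : WordDist T (f a) (f a') ≤ C * WordDist S a a' := by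
  have hC0 : (0:ℝ) < C := lt_of_lt_of_le zero_lt_one hC1
  have key : ∀ l : List A, (∀ x ∈ l, x ∈ S ∨ x⁻¹ ∈ S) →
      ∃ l' : List B, (∀ y ∈ l', y ∈ T ∨ y⁻¹ ∈ T) ∧ f l.prod = l'.prod ∧
        (l'.length : ℝ) ≤ C * l.length := by
    intro l
    induction l with
    | nil => intro _; exact ⟨[], by simp, by simp, by simp⟩
    | cons x l ih =>
        intro hx
        obtain ⟨lx, hlx, ex, hlenx⟩ := hC x (hx x (by simp))
        obtain ⟨l', hl', e', hlen'⟩ := ih (fun y hy => hx y (by simp [hy]))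
        refine ⟨lx ++ l', ?_, ?_, ?_⟩
        · intro y hy
          rcases List.mem_append.mp hy with h | h
          exacts [hlx y h, hl' y h]
        · simp [map_mul, ex, e']
        · simp only [List.length_append, List.length_cons]
          push_cast
          nlinarith
  have hne : {r : ℝ | ∃ l : List A, (∀ x ∈ l, x ∈ S ∨ x⁻¹ ∈ S) ∧
      a⁻¹ * a' = l.prod ∧ r = l.length}.Nonempty := by
    obtain ⟨l, hl, e⟩ := word_exists hSgen (a⁻¹ * a')
    exact ⟨l.length, l, hl, e, rfl⟩
  have main : WordDist T (f a) (f a') / C ≤ WordDist S a a' := by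
    refine le_csInf hne ?_
    rintro r ⟨l, hl, e, rfl⟩
    obtain ⟨l', hl', e', hlen'⟩ := key l hl
    have hfd : WordDist T (f a) (f a') ≤ (l'.length : ℝ) :=
      wordDist_le hl' (by rw [← e', ← e, map_mul, map_inv])
    rw [div_le_iff₀ hC0]
    nlinarith
  rw [div_le_iff₀ hC0] at main
  nlinarith

lemma exists_bound (f : A →* B) {S : Set A} {T : Set B} (hSf : S.Finite)
    (hT : Subgroup.closure T = ⊤) :
    ∃ C : ℝ, 1 ≤ C ∧ ∀ x : A, (x ∈ S ∨ x⁻¹ ∈ S) →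
      ∃ l : List B, (∀ y ∈ l, y ∈ T ∨ y⁻¹ ∈ T) ∧ f x = l.prod ∧ (l.length : ℝ) ≤ C := by
  choose w hw1 hw2 using word_exists hT
  obtain ⟨C0, hC0⟩ := (hSf.image (fun s => ((w (f s)).length : ℝ))).bddAbove
  refine ⟨max C0 1, le_max_right _ _, ?_⟩
  intro x hx
  rcases hx with hx | hx
  · exact ⟨w (f x), hw1 _, hw2 _,
      le_trans (hC0 ⟨x, hx, rfl⟩) (le_max_left _ _)⟩
  · refine ⟨((w (f x⁻¹)).map fun y => y⁻¹).reverse, ?_, ?_, ?_⟩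
    · intro z hz
      simp only [List.mem_reverse, List.mem_map] at hz
      obtain ⟨y, hy, rfl⟩ := hz
      rcases hw1 (f x⁻¹) y hy with h | h
      · exact Or.inr (by simpa)
      · exact Or.inl h
    · have : f x = ((w (f x⁻¹)).prod)⁻¹ := by
        rw [← hw2 (f x⁻¹), map_inv, inv_inv]
      rw [this, List.prod_inv_reverse]
    · simp only [List.length_reverse, List.length_map]
      exact le_trans (hC0 ⟨x⁻¹, hx, rfl⟩) (le_max_left _ _)

end Aux

/-- If H ≤ L ≤ G are finitely generated, H is stable in L and L is
stable in G, then H is stable in G. -/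
theorem stmt_6 {G : Type*} [Group G] (H L : Subgroup G) (hHL : H ≤ L)
    (SG : Set G) (hSGf : SG.Finite) (hSGg : Subgroup.closure SG = ⊤)
    (SL : Set L) (hSLf : SL.Finite) (hSLg : Subgroup.closure SL = ⊤)
    (SH : Set H) (hSHf : SH.Finite) (hSHg : Subgroup.closure SH = ⊤)
    (SHL : Set (H.subgroupOf L)) (hSHLf : SHL.Finite)
    (hSHLg : Subgroup.closure SHL = ⊤)
    (h1 : StableSubgroup SL (H.subgroupOf L) SHL)
    (h2 : StableSubgroup SG L SL) :
    StableSubgroup SG H SH := by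
  constructor
  · -- quasi-isometric embedding
    obtain ⟨κ1, lam1, hκ1, hlam1, hb1⟩ := h1.1
    obtain ⟨κ2, lam2, hκ2, hlam2, hb2⟩ := h2.1
    obtain ⟨C1, hC1, hC1'⟩ := exists_bound H.subtype hSHf hSGg
    set e := Subgroup.subgroupOfEquivOfLe hHL with he
    obtain ⟨C2, hC2, hC2'⟩ := exists_bound e.toMonoidHom hSHLf hSHg
    have hκ1p : (0:ℝ) < κ1 := lt_of_lt_of_le zero_lt_one hκ1
    have hκ2p : (0:ℝ) < κ2 := lt_of_lt_of_le zero_lt_one hκ2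
    have hC2p : (0:ℝ) < C2 := lt_of_lt_of_le zero_lt_one hC2
    refine ⟨max C1 (C2 * (κ1 * κ2)), κ2 * lam1 + lam2, le_trans hC1 (le_max_left _ _),
      by nlinarith, ?_⟩
    intro a a'
    have hup : WordDist SG ((a : G)) ((a' : G)) ≤ C1 * WordDist SH a a' :=
      wordDist_lipschitz H.subtype hSHg hC1 hC1' a a'
    have hcoe : ∀ b : H, (((e.symm b : H.subgroupOf L) : L) : G) = (b : G) := by
      intro b
      simp [he, Subgroup.subgroupOfEquivOfLe]
    have hH : WordDist SH a a' ≤ C2 * WordDist SHL (e.symm a) (e.symm a') := by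
      have h := wordDist_lipschitz e.toMonoidHom hSHLg hC2 hC2' (e.symm a) (e.symm a')
      simpa using h
    have l1 : κ1⁻¹ * WordDist SHL (e.symm a) (e.symm a') - lam1 ≤
        WordDist SL ((e.symm a : L)) ((e.symm a' : L)) :=
      (hb1 (e.symm a) (e.symm a')).1
    have l2 : κ2⁻¹ * WordDist SL ((e.symm a : L)) ((e.symm a' : L)) - lam2 ≤
        WordDist SG ((a : G)) ((a' : G)) := by
      have h := (hb2 (e.symm a : L) (e.symm a' : L)).1
      simp only at h
      rwa [hcoe a, hcoe a'] at h
    have hHnn := wordDist_nonneg SH a a'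
    have hHLnn := wordDist_nonneg SHL (e.symm a) (e.symm a')
    have hLnn := wordDist_nonneg SL (e.symm a : L) (e.symm a' : L)
    have hGnn := wordDist_nonneg SG (a : G) (a' : G)
    constructor
    · -- lower bound
      have hmaxp : (0:ℝ) < max C1 (C2 * (κ1 * κ2)) :=
        lt_of_lt_of_le (by positivity) (le_max_right _ _)
      rw [sub_le_iff_le_add, inv_mul_le_iff₀ hmaxp]
      have step : WordDist SH a a' ≤
          (C2 * (κ1 * κ2)) * (WordDist SG ((a : G)) ((a' : G)) + (κ2 * lam1 + lam2)) := by
        have hB : WordDist SHL (e.symm a) (e.symm a') ≤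
            κ1 * (WordDist SL ((e.symm a : L)) ((e.symm a' : L)) + lam1) :=
          (inv_mul_le_iff₀ hκ1p).mp (by linarith)
        have hCc : WordDist SL ((e.symm a : L)) ((e.symm a' : L)) ≤
            κ2 * (WordDist SG ((a : G)) ((a' : G)) + lam2) :=
          (inv_mul_le_iff₀ hκ2p).mp (by linarith)
        have t1 : WordDist SH a a' ≤
            C2 * (κ1 * (WordDist SL ((e.symm a : L)) ((e.symm a' : L)) + lam1)) :=
          le_trans hH (mul_le_mul_of_nonneg_left hB hC2p.le)
        have t2 : WordDist SL ((e.symm a : L)) ((e.symm a' : L)) + lam1 ≤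
            κ2 * (WordDist SG ((a : G)) ((a' : G)) + lam2) + lam1 := by linarith
        have t3 : WordDist SH a a' ≤
            C2 * (κ1 * (κ2 * (WordDist SG ((a : G)) ((a' : G)) + lam2) + lam1)) :=
          le_trans t1 (mul_le_mul_of_nonneg_left
            (mul_le_mul_of_nonneg_left t2 hκ1p.le) hC2p.le)
        have t4 : C2 * κ1 * lam1 ≤ C2 * κ1 * lam1 * (κ2 * κ2) :=
          le_mul_of_one_le_right (by positivity) (by nlinarith)
        nlinarith [t3, t4]
      refine le_trans step (mul_le_mul_of_nonneg_right (le_max_right _ _) ?_)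
      nlinarith
    · -- upper bound
      have : C1 * WordDist SH a a' ≤ max C1 (C2 * (κ1 * κ2)) * WordDist SH a a' :=
        mul_le_mul_of_nonneg_right (le_max_left _ _) hHnn
      nlinarith
  · -- stability
    intro κ hκ
    obtain ⟨D, hD, hprop⟩ := h2.2 κ hκ
    refine ⟨D, hD, ?_⟩
    intro T T' q q' hT hT' hq hq' h0 hTe hmem0 hmemT
    exact hprop T T' q q' hT hT' hq hq' h0 hTe (hHL hmem0) (hHL hmemT)
end

section
/- Let X be a geodesic metric space, γ a continuous path with endpoints a, b, t ∈ (0, 1/2), and K > 0. Decompose γ into γ_l ⊔ γ_mid ⊔ γ_r where γ_mid is the t-middle of γ, γ_l the points at distance < t·d(a,b) from a (or before a), and γ_r the points at distance < t·d(a,b) from b (or after b). Let p be a continuous path with endpoints a, b avoiding the K-neighborhood of γ_mid. Suppose every point of γ_l has distance greater than 2K from every point of γ_r. Then among the maximal subarcs of p lying outside the open K-neighborhood of γ, there exists one whose one endpoint is within K of γ_l and whose other endpoint is within K of γ_r. -/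
/-- A geodesic metric space. -/
def IsGeodesicSpace (X : Type*) [MetricSpace X] : Prop :=
  ∀ x y : X, ∃ f : ℝ → X, f 0 = x ∧ f (dist x y) = y ∧
    ∀ s ∈ Set.Icc 0 (dist x y), ∀ t ∈ Set.Icc 0 (dist x y), dist (f s) (f t) = |s - t|

/-- Decompose the image Γ of a path as Γ = γl ∪ γmid ∪ γr, where the
endpoints a ∈ γl and b ∈ γr. If a continuous path p from a to b avoids the
K-neighborhood of γmid, and every point of γl is at distance > 2K from every point
of γr, then among the maximal subarcs of p lying outside the open K-neighborhood of
Γ there is one whose endpoints are at distance exactly K from Γ, one endpoint within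
K of γl and the other within K of γr. -/
theorem stmt_13 {X : Type*} [MetricSpace X] (hX : IsGeodesicSpace X)
    (γ : ℝ → X) (J : Set ℝ) (hJ : J.OrdConnected)
    (γl γmid γr Γ : Set X) (hΓim : Γ = γ '' J) (hΓ : Γ = γl ∪ γmid ∪ γr)
    (t : ℝ) (ht : t ∈ Set.Ioo 0 (1/2 : ℝ)) (K : ℝ) (hK : 0 < K)
    (a b : X) (ha : a ∈ γl) (hb : b ∈ γr)
    (p : ℝ → X) (hp : ContinuousOn p (Set.Icc 0 1)) (hp0 : p 0 = a) (hp1 : p 1 = b)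
    (havoid : ∀ u ∈ Set.Icc (0:ℝ) 1, K < Metric.infDist (p u) γmid)
    (hsep : ∀ x ∈ γl, ∀ y ∈ γr, 2 * K < dist x y) :
    ∃ u ∈ Set.Icc (0:ℝ) 1, ∃ v ∈ Set.Icc (0:ℝ) 1, u ≤ v ∧
      (∀ s ∈ Set.Icc u v, K ≤ Metric.infDist (p s) Γ) ∧
      Metric.infDist (p u) Γ = K ∧ Metric.infDist (p v) Γ = K ∧
      ((Metric.infDist (p u) γl ≤ K ∧ Metric.infDist (p v) γr ≤ K) ∨
        (Metric.infDist (p u) γr ≤ K ∧ Metric.infDist (p v) γl ≤ K)) := by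
  classical
  -- continuous distance functions
  set hl : ℝ → ℝ := fun s => Metric.infDist (p s) γl with hhl
  set hr : ℝ → ℝ := fun s => Metric.infDist (p s) γr with hhr
  have hlc : ContinuousOn hl (Set.Icc 0 1) :=
    (Metric.continuous_infDist_pt γl).comp_continuousOn hp
  have hrc : ContinuousOn hr (Set.Icc 0 1) :=
    (Metric.continuous_infDist_pt γr).comp_continuousOn hp
  have hγlne : γl.Nonempty := ⟨a, ha⟩
  have hγrne : γr.Nonempty := ⟨b, hb⟩
  -- the two target sets
  set Sr : Set ℝ := {s ∈ Set.Icc (0:ℝ) 1 | hr s ≤ K} with hSr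
  have hSrclosed : IsClosed Sr :=
    hrc.preimage_isClosed_of_isClosed isClosed_Icc isClosed_Iic
  have h1Sr : (1:ℝ) ∈ Sr := by
    refine ⟨Set.right_mem_Icc.2 zero_le_one, ?_⟩
    simp [hhr, hp1, Metric.infDist_zero_of_mem hb, hK.le]
  have hSrbdd : BddBelow Sr := ⟨0, fun s hs => hs.1.1⟩
  set v : ℝ := sInf Sr with hv
  have hvSr : v ∈ Sr := hSrclosed.csInf_mem ⟨1, h1Sr⟩ hSrbdd
  have hv01 : v ∈ Set.Icc (0:ℝ) 1 := hvSr.1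
  have hnotSr : ∀ s, s ∈ Set.Icc (0:ℝ) 1 → s < v → K < hr s := by
    intro s hs hsv
    by_contra h
    exact absurd (csInf_le hSrbdd ⟨hs, le_of_not_gt h⟩) (not_le.2 hsv)
  set Sl : Set ℝ := {s ∈ Set.Icc (0:ℝ) v | hl s ≤ K} with hSl
  have hSlclosed : IsClosed Sl := by
    have : ContinuousOn hl (Set.Icc 0 v) := hlc.mono (Set.Icc_subset_Icc le_rfl hv01.2)
    exact this.preimage_isClosed_of_isClosed isClosed_Icc isClosed_Iic
  have h0Sl : (0:ℝ) ∈ Sl := by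
    refine ⟨Set.left_mem_Icc.2 hv01.1, ?_⟩
    simp [hhl, hp0, Metric.infDist_zero_of_mem ha, hK.le]
  have hSlbdd : BddAbove Sl := ⟨v, fun s hs => hs.1.2⟩
  set u : ℝ := sSup Sl with hu
  have huSl : u ∈ Sl := hSlclosed.csSup_mem ⟨0, h0Sl⟩ hSlbdd
  have hu0v : u ∈ Set.Icc (0:ℝ) v := huSl.1
  have hu01 : u ∈ Set.Icc (0:ℝ) 1 := ⟨hu0v.1, hu0v.2.trans hv01.2⟩
  have huv : u ≤ v := hu0v.2
  have hnotSl : ∀ s, s ∈ Set.Icc (0:ℝ) v → u < s → K < hl s := by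
    intro s hs hus
    by_contra h
    exact absurd (le_csSup hSlbdd ⟨hs, le_of_not_gt h⟩) (not_le.2 hus)
  -- lower bounds for hl, hr at u and v
  have key : K ≤ hl u ∧ K ≤ hr u ∧ K ≤ hl v ∧ K ≤ hr v := by
    rcases eq_or_lt_of_le huv with heq | hlt
    · -- u = v : use the separation argument
      have hboth : K ≤ hl u ∧ K ≤ hr u := by
        by_contra h
        push_neg at h
        -- at least one is < K; in fact both are ≤ K, derive contradiction
        have hlu : hl u ≤ K := huSl.2
        have hru : hr u ≤ K := by rw [heq]; exact hvSr.2
        rcases lt_or_ge (hl u) K with h1 | h1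
        · obtain ⟨y, hy, hy'⟩ := (Metric.infDist_lt_iff hγlne).1 h1
          have h2 : hr u < 2 * K - dist (p u) y := by
            have : K < 2 * K - dist (p u) y := by linarith
            exact lt_of_le_of_lt hru this
          obtain ⟨z, hz, hz'⟩ := (Metric.infDist_lt_iff hγrne).1 h2
          have := hsep y hy z hz
          have : dist y z ≤ dist y (p u) + dist (p u) z := dist_triangle _ _ _
          rw [dist_comm y (p u)] at this
          linarith [hsep y hy z hz]
        · rcases lt_or_ge (hr u) K with h2 | h2
          · obtain ⟨z, hz, hz'⟩ := (Metric.infDist_lt_iff hγrne).1 h2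
            have h3 : hl u < 2 * K - dist (p u) z := by
              have : K < 2 * K - dist (p u) z := by linarith
              exact lt_of_le_of_lt hlu this
            obtain ⟨y, hy, hy'⟩ := (Metric.infDist_lt_iff hγlne).1 h3
            have : dist y z ≤ dist y (p u) + dist (p u) z := dist_triangle _ _ _
            rw [dist_comm y (p u)] at this
            linarith [hsep y hy z hz]
          · exact (h h1).not_ge h2
      exact ⟨hboth.1, hboth.2, by rw [← heq]; exact hboth.1, by rw [← heq]; exact hboth.2⟩
    · -- u < v : use limits from the open interval
      have hIoo : ∀ s ∈ Set.Ioo u v, K < hl s ∧ K < hr s := by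
        intro s hs
        have hs01 : s ∈ Set.Icc (0:ℝ) 1 := ⟨hu0v.1.trans hs.1.le, hs.2.le.trans hv01.2⟩
        exact ⟨hnotSl s ⟨hu0v.1.trans hs.1.le, hs.2.le⟩ hs.1,
          hnotSr s hs01 hs.2⟩
      have hclu : u ∈ closure (Set.Ioo u v) := by
        rw [closure_Ioo hlt.ne]; exact ⟨le_rfl, huv⟩
      have hclv : v ∈ closure (Set.Ioo u v) := by
        rw [closure_Ioo hlt.ne]; exact ⟨huv, le_rfl⟩
      haveI hnbu : (nhdsWithin u (Set.Ioo u v)).NeBot :=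
        mem_closure_iff_nhdsWithin_neBot.1 hclu
      haveI hnbv : (nhdsWithin v (Set.Ioo u v)).NeBot :=
        mem_closure_iff_nhdsWithin_neBot.1 hclv
      have hsub : Set.Ioo u v ⊆ Set.Icc (0:ℝ) 1 := fun s hs =>
        ⟨hu0v.1.trans hs.1.le, hs.2.le.trans hv01.2⟩
      have hev : ∀ᶠ s in nhdsWithin u (Set.Ioo u v), s ∈ Set.Ioo u v :=
        eventually_mem_nhdsWithin
      have hev' : ∀ᶠ s in nhdsWithin v (Set.Ioo u v), s ∈ Set.Ioo u v :=
        eventually_mem_nhdsWithin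
      have hlu : K ≤ hl u :=
        ge_of_tendsto (((hlc u hu01).mono hsub)) (hev.mono fun s hs => (hIoo s hs).1.le)
      have hru' : K < hr u := hnotSr u hu01 hlt
      have hrv : K ≤ hr v :=
        ge_of_tendsto (((hrc v hv01).mono hsub)) (hev'.mono fun s hs => (hIoo s hs).2.le)
      have hlv : K < hl v := hnotSl v ⟨hv01.1, le_rfl⟩ hlt
      exact ⟨hlu, hru'.le, hlv.le, hrv⟩
  obtain ⟨hlu, hru, hlv, hrv⟩ := key
  -- infDist to Γ at a point far from all three pieces
  have hΓge : ∀ s ∈ Set.Icc (0:ℝ) 1, K ≤ hl s → K ≤ hr s → K ≤ Metric.infDist (p s) Γ := by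
    intro s hs h1 h2
    by_contra hcon
    push_neg at hcon
    have hΓne : Γ.Nonempty := ⟨a, hΓ ▸ Or.inl (Or.inl ha)⟩
    obtain ⟨y, hy, hdy⟩ := (Metric.infDist_lt_iff hΓne).1 hcon
    rw [hΓ] at hy
    rcases hy with (hy | hy) | hy
    · exact absurd hdy (not_lt.2 (h1.trans (Metric.infDist_le_dist_of_mem hy)))
    · exact absurd hdy (not_lt.2 ((havoid s hs).le.trans (Metric.infDist_le_dist_of_mem hy)))
    · exact absurd hdy (not_lt.2 (h2.trans (Metric.infDist_le_dist_of_mem hy)))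
  have hΓu : Metric.infDist (p u) Γ = K := by
    have hle : Metric.infDist (p u) Γ ≤ hl u :=
      Metric.infDist_le_infDist_of_subset (hΓ ▸ fun x hx => Or.inl (Or.inl hx)) hγlne
    exact le_antisymm (hle.trans huSl.2) (hΓge u hu01 hlu hru)
  have hΓv : Metric.infDist (p v) Γ = K := by
    have hle : Metric.infDist (p v) Γ ≤ hr v :=
      Metric.infDist_le_infDist_of_subset (hΓ ▸ fun x hx => Or.inr hx) hγrne
    exact le_antisymm (hle.trans hvSr.2) (hΓge v hv01 hlv hrv)
  refine ⟨u, hu01, v, hv01, huv, ?_, hΓu, hΓv, Or.inl ⟨huSl.2, hvSr.2⟩⟩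
  intro s hs
  rcases eq_or_lt_of_le hs.1 with rfl | hus
  · exact hΓu.ge
  rcases eq_or_lt_of_le hs.2 with rfl | hsv
  · exact hΓv.ge
  have hs01 : s ∈ Set.Icc (0:ℝ) 1 := ⟨hu01.1.trans hs.1, hs.2.trans hv01.2⟩
  exact hΓge s hs01 (hnotSl s ⟨hs01.1, hsv.le⟩ hus).le (hnotSr s hs01 hsv).le
end

section
/- In the Poincaré disk model of the hyperbolic plane ℍ², let γ be the geodesic through the origin given by the horizontal diameter. For every D > 0, there exists a path p with endpoints a, b on γ satisfying ‖p‖ ≤ 3·d(a, b), such that the point of γ corresponding to the origin does not lie in the D-neighborhood of p. Consequently, γ does not satisfy Property 5: it is not the case that for every C ≥ 1 there is K ≥ 0 such that every path p with endpoints a, b on γ and ‖p‖ ≤ C·d(a,b) contains the segment γ|_{[a,b]} in its K-neighborhood. -/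
open Real Set

namespace Stmt15

/-- `arsinh x ≤ x` for nonnegative `x`. -/
lemma arsinh_le_self {x : ℝ} (hx : 0 ≤ x) : Real.arsinh x ≤ x :=
  Real.sinh_le_sinh.mp (by rwa [Real.sinh_arsinh, Real.self_le_sinh_iff])

/-- Distance bound for a horizontal segment. -/
lemma dist_horiz (z w : UpperHalfPlane) (h : z.im = w.im) :
    dist z w ≤ |z.re - w.re| / z.im := by
  have h0 : (0:ℝ) < z.im := z.im_pos
  have him : Real.sqrt (z.im * w.im) = z.im := by rw [← h, Real.sqrt_mul_self h0.le]
  have hcd : dist (z : ℂ) (w : ℂ) = |z.re - w.re| := by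
    rw [Complex.dist_of_im_eq (by rw [UpperHalfPlane.coe_im, UpperHalfPlane.coe_im, h]),
      Real.dist_eq, UpperHalfPlane.coe_re, UpperHalfPlane.coe_re]
  rw [UpperHalfPlane.dist_eq, hcd, him]
  have h1 : Real.arsinh (|z.re - w.re| / (2 * z.im)) ≤ |z.re - w.re| / (2 * z.im) :=
    arsinh_le_self (by positivity)
  calc 2 * Real.arsinh (|z.re - w.re| / (2 * z.im))
      ≤ 2 * (|z.re - w.re| / (2 * z.im)) := by linarith
    _ = |z.re - w.re| / z.im := by field_simp

/-- Vertical-line distance. -/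
lemma dist_vert (z w : UpperHalfPlane) (h : z.re = w.re) :
    dist z w = |Real.log z.im - Real.log w.im| := by
  rw [UpperHalfPlane.dist_of_re_eq h, Real.dist_eq]

/-- Lower bound on distance via imaginary parts. -/
lemma log_im_le_dist (z w : UpperHalfPlane) :
    |Real.log z.im - Real.log w.im| ≤ dist z w := by
  have := UpperHalfPlane.dist_log_im_le z w
  rwa [Real.dist_eq] at this

/-- Lower bound on distance from `i` to a point with real part `X ≥ 0`. -/
lemma arsinh_le_dist (z w : UpperHalfPlane) (hwre : w.re = 0) (hwim : w.im = 1)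
    {X : ℝ} (hX : 0 ≤ X) (hz : z.re = X) : Real.arsinh X ≤ dist w z := by
  by_contra hlt
  push_neg at hlt
  have h1 : Real.cosh (dist w z) < Real.cosh (Real.arsinh X) := by
    rw [Real.cosh_lt_cosh, abs_of_nonneg dist_nonneg,
      abs_of_nonneg (Real.arsinh_nonneg_iff.2 hX)]
    exact hlt
  rw [Real.cosh_arsinh, UpperHalfPlane.cosh_dist' w z, hwre, hwim, hz] at h1
  have hzim : (0:ℝ) < z.im := z.im_pos
  have h2 : Real.sqrt (1 + X ^ 2) ≤ ((0 - X) ^ 2 + 1 ^ 2 + z.im ^ 2) / (2 * 1 * z.im) := by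
    rw [le_div_iff₀ (by positivity)]
    nlinarith [sq_nonneg (Real.sqrt (1 + X ^ 2) - z.im),
      Real.sq_sqrt (by positivity : (0:ℝ) ≤ 1 + X ^ 2)]
  linarith

/-- Variation bound for Lipschitz-type path on an interval. -/
lemma evar_le_of_lip (p : ℝ → UpperHalfPlane) (a b L : ℝ) (hab : a ≤ b) (hL : 0 ≤ L)
    (h : ∀ x ∈ Icc a b, ∀ y ∈ Icc a b, dist (p x) (p y) ≤ L * dist x y) :
    eVariationOn p (Icc a b) ≤ ENNReal.ofReal (L * (b - a)) := by
  have hl : LipschitzOnWith L.toNNReal p (Icc a b) := by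
    rw [lipschitzOnWith_iff_dist_le_mul]
    intro x hx y hy
    simpa [Real.coe_toNNReal L hL] using h x hx y hy
  have h3 : eVariationOn (id : ℝ → ℝ) (Icc a b) ≤ ENNReal.ofReal (b - a) := by
    have := MonotoneOn.eVariationOn_le (f := (id : ℝ → ℝ)) (s := Icc a b) monotoneOn_id
      (Set.left_mem_Icc.2 hab) (Set.right_mem_Icc.2 hab)
    simpa using this
  have hco : (L.toNNReal : ENNReal) = ENNReal.ofReal L := rfl
  calc eVariationOn p (Icc a b) = eVariationOn (p ∘ id) (Icc a b) := by
        rw [Function.comp_id]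
    _ ≤ (L.toNNReal : ENNReal) * eVariationOn (id : ℝ → ℝ) (Icc a b) :=
        hl.comp_eVariationOn_le (Set.mapsTo_id _)
    _ ≤ ENNReal.ofReal L * ENNReal.ofReal (b - a) := by
        rw [hco]; exact mul_le_mul_right h3 _
    _ = ENNReal.ofReal (L * (b - a)) := (ENNReal.ofReal_mul hL).symm


noncomputable def gfun (R D t : ℝ) : ℝ :=
  -R + min (max (5*(R-D)*t) 0) (R-D) + min (max (10*D*(t - 2/5)) 0) (2*D)
    + min (max (5*(R-D)*(t - 4/5)) 0) (R-D)

noncomputable def xrfun (t : ℝ) : ℝ := min 1 (max 0 (min (5*t - 1) (4 - 5*t)))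

noncomputable def ppath (R D X t : ℝ) : UpperHalfPlane :=
  UpperHalfPlane.mk (↑(X * xrfun t) + ↑(Real.exp (gfun R D t)) * Complex.I)
    (by rw [Complex.add_im, Complex.ofReal_im, Complex.mul_I_im, Complex.ofReal_re, zero_add]
        exact Real.exp_pos (gfun R D t))

lemma ppath_coe (R D X t : ℝ) :
    (ppath R D X t : ℂ) = ↑(X * xrfun t) + ↑(Real.exp (gfun R D t)) * Complex.I := rfl

lemma ppath_re (R D X t : ℝ) : (ppath R D X t).re = X * xrfun t := by
  rw [← UpperHalfPlane.coe_re, ppath_coe, Complex.add_re, Complex.ofReal_re, Complex.mul_I_re,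
    Complex.ofReal_im, neg_zero, add_zero]

lemma ppath_im (R D X t : ℝ) : (ppath R D X t).im = Real.exp (gfun R D t) := by
  rw [← UpperHalfPlane.coe_im, ppath_coe, Complex.add_im, Complex.ofReal_im, Complex.mul_I_im,
    Complex.ofReal_re, zero_add]

lemma continuous_ppath (R D X : ℝ) : Continuous (ppath R D X) := by
  rw [UpperHalfPlane.isEmbedding_coe.continuous_iff]
  have hg : Continuous (gfun R D) := by
    unfold gfun
    fun_prop
  have hx : Continuous xrfun := by
    unfold xrfun
    fun_prop
  have : ((↑) : UpperHalfPlane → ℂ) ∘ ppath R D X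
      = fun t => ↑(X * xrfun t) + ↑(Real.exp (gfun R D t)) * Complex.I := rfl
  rw [this]
  fun_prop

variable {R D : ℝ}

section pieces
variable (hD : 0 < D) (hR : D ≤ R)
include hD hR

lemma gfun_eq1 {t : ℝ} (ht : t ∈ Icc (0:ℝ) (1/5)) : gfun R D t = -R + 5*(R-D)*t := by
  obtain ⟨h1, h2⟩ := ht
  unfold gfun
  rw [max_eq_left (by nlinarith), min_eq_left (by nlinarith),
    max_eq_right (by nlinarith), min_eq_left (by nlinarith),
    max_eq_right (by nlinarith), min_eq_left (by nlinarith)]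
  ring

lemma gfun_eq2 {t : ℝ} (ht : t ∈ Icc (1/5:ℝ) (2/5)) : gfun R D t = -D := by
  obtain ⟨h1, h2⟩ := ht
  unfold gfun
  rw [max_eq_left (by nlinarith), min_eq_right (by nlinarith),
    max_eq_right (by nlinarith), min_eq_left (by nlinarith),
    max_eq_right (by nlinarith), min_eq_left (by nlinarith)]
  ring

lemma gfun_eq3 {t : ℝ} (ht : t ∈ Icc (2/5:ℝ) (3/5)) : gfun R D t = -D + 10*D*(t - 2/5) := by
  obtain ⟨h1, h2⟩ := ht
  unfold gfun
  rw [max_eq_left (by nlinarith), min_eq_right (by nlinarith),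
    max_eq_left (by nlinarith), min_eq_left (by nlinarith),
    max_eq_right (by nlinarith), min_eq_left (by nlinarith)]
  ring

lemma gfun_eq4 {t : ℝ} (ht : t ∈ Icc (3/5:ℝ) (4/5)) : gfun R D t = D := by
  obtain ⟨h1, h2⟩ := ht
  unfold gfun
  rw [max_eq_left (by nlinarith), min_eq_right (by nlinarith),
    max_eq_left (by nlinarith), min_eq_right (by nlinarith),
    max_eq_right (by nlinarith), min_eq_left (by nlinarith)]
  ring

lemma gfun_eq5 {t : ℝ} (ht : t ∈ Icc (4/5:ℝ) 1) : gfun R D t = D + 5*(R-D)*(t - 4/5) := by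
  obtain ⟨h1, h2⟩ := ht
  unfold gfun
  rw [max_eq_left (by nlinarith), min_eq_right (by nlinarith),
    max_eq_left (by nlinarith), min_eq_right (by nlinarith),
    max_eq_left (by nlinarith), min_eq_left (by nlinarith)]
  ring

lemma gfun_le {t : ℝ} (ht : t ≤ 2/5) : gfun R D t ≤ -D := by
  have b2 : min (max (10*D*(t - 2/5)) 0) (2*D) = 0 := by
    rw [max_eq_right (by nlinarith), min_eq_left (by nlinarith)]
  have b3 : min (max (5*(R-D)*(t - 4/5)) 0) (R-D) = 0 := by
    rw [max_eq_right (by nlinarith), min_eq_left (by nlinarith)]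
  unfold gfun
  rw [b2, b3]
  have a1 := min_le_right (max (5*(R-D)*t) 0) (R-D)
  linarith

lemma gfun_ge {t : ℝ} (ht : 3/5 ≤ t) : gfun R D t ≥ D := by
  unfold gfun
  have a1 : R - D ≤ min (max (5*(R-D)*t) 0) (R-D) := by
    refine le_min (le_max_of_le_left (by nlinarith)) le_rfl
  have a2 : 2*D ≤ min (max (10*D*(t - 2/5)) 0) (2*D) := by
    refine le_min (le_max_of_le_left (by nlinarith)) le_rfl
  have a3 : 0 ≤ min (max (5*(R-D)*(t - 4/5)) 0) (R-D) := by
    refine le_min (le_max_right _ _) (by nlinarith)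
  linarith

end pieces

lemma xrfun_eq1 {t : ℝ} (ht : t ∈ Icc (0:ℝ) (1/5)) : xrfun t = 0 := by
  obtain ⟨h1, h2⟩ := ht
  unfold xrfun
  have i1 : min (5*t - 1) (4 - 5*t) = 5*t - 1 := min_eq_left (by nlinarith)
  rw [i1, max_eq_left (by nlinarith), min_eq_right (by nlinarith)]

lemma xrfun_eq2 {t : ℝ} (ht : t ∈ Icc (1/5:ℝ) (2/5)) : xrfun t = 5*t - 1 := by
  obtain ⟨h1, h2⟩ := ht
  unfold xrfun
  have i1 : min (5*t - 1) (4 - 5*t) = 5*t - 1 := min_eq_left (by nlinarith)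
  rw [i1, max_eq_right (by nlinarith), min_eq_right (by nlinarith)]

lemma xrfun_eq3 {t : ℝ} (ht : t ∈ Icc (2/5:ℝ) (3/5)) : xrfun t = 1 := by
  obtain ⟨h1, h2⟩ := ht
  unfold xrfun
  rcases le_total (5*t - 1) (4 - 5*t) with h | h
  · have i1 : min (5*t - 1) (4 - 5*t) = 5*t - 1 := min_eq_left h
    rw [i1, max_eq_right (by nlinarith), min_eq_left (by nlinarith)]
  · have i1 : min (5*t - 1) (4 - 5*t) = 4 - 5*t := min_eq_right h
    rw [i1, max_eq_right (by nlinarith), min_eq_left (by nlinarith)]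

lemma xrfun_eq4 {t : ℝ} (ht : t ∈ Icc (3/5:ℝ) (4/5)) : xrfun t = 4 - 5*t := by
  obtain ⟨h1, h2⟩ := ht
  unfold xrfun
  have i1 : min (5*t - 1) (4 - 5*t) = 4 - 5*t := min_eq_right (by nlinarith)
  rw [i1, max_eq_right (by nlinarith), min_eq_right (by nlinarith)]

lemma xrfun_eq5 {t : ℝ} (ht : t ∈ Icc (4/5:ℝ) 1) : xrfun t = 0 := by
  obtain ⟨h1, h2⟩ := ht
  unfold xrfun
  have i1 : min (5*t - 1) (4 - 5*t) = 4 - 5*t := min_eq_right (by nlinarith)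
  rw [i1, max_eq_left (by nlinarith), min_eq_right (by nlinarith)]



lemma key (γ : ℝ → UpperHalfPlane) (hγ : ∀ s : ℝ, (γ s : ℂ) = Complex.I * Real.exp s)
    (D : ℝ) (hD : 0 < D) :
    ∃ (s s' : ℝ) (p : ℝ → UpperHalfPlane), s ≤ 0 ∧ 0 ≤ s' ∧ s ≤ s' ∧
      ContinuousOn p (Set.Icc 0 1) ∧ p 0 = γ s ∧ p 1 = γ s' ∧
      eVariationOn p (Set.Icc 0 1) ≤ ENNReal.ofReal (3 * dist (γ s) (γ s')) ∧
      ∀ u ∈ Set.Icc (0:ℝ) 1, D ≤ dist (γ 0) (p u) := by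
  have hre : ∀ s, (γ s).re = 0 := fun s => by
    rw [← UpperHalfPlane.coe_re, hγ s]; simp [-Complex.ofReal_exp]
  have him : ∀ s, (γ s).im = Real.exp s := fun s => by
    rw [← UpperHalfPlane.coe_im, hγ s]; simp [-Complex.ofReal_exp]
  have hdist : ∀ a b : ℝ, dist (γ a) (γ b) = |a - b| := fun a b => by
    rw [UpperHalfPlane.dist_of_re_eq ((hre a).trans (hre b).symm), him, him, Real.log_exp,
      Real.log_exp, Real.dist_eq]
  obtain ⟨R, hRdef⟩ : ∃ R : ℝ, R = 5*D + 10*Real.sinh D*Real.cosh D := ⟨_, rfl⟩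
  have hsc : 0 ≤ Real.sinh D * Real.cosh D :=
    mul_nonneg (Real.sinh_nonneg_iff.2 hD.le) (Real.cosh_pos D).le
  have hDR : D ≤ R := by nlinarith
  have hX0 : 0 ≤ Real.sinh D := Real.sinh_nonneg_iff.2 hD.le
  have hRD0 : (0:ℝ) ≤ 5*(R - D) := by linarith
  have hXe : (0:ℝ) ≤ 5*Real.sinh D*Real.exp D := by positivity
  have hXe' : (0:ℝ) ≤ 5*Real.sinh D*Real.exp (-D) := by positivity
  set p : ℝ → UpperHalfPlane := ppath R D (Real.sinh D) with hpdef
  have hp0 : p 0 = γ (-R) := by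
    apply UpperHalfPlane.ext
    rw [hpdef, ppath_coe, hγ,
      show Real.sinh D * xrfun 0 = 0 by
        rw [xrfun_eq1 (by norm_num : (0:ℝ) ∈ Icc 0 (1/5))]; ring,
      show gfun R D 0 = -R by
        rw [gfun_eq1 hD hDR (by norm_num : (0:ℝ) ∈ Icc 0 (1/5))]; ring]
    simp [-Complex.ofReal_exp, mul_comm]
  have hp1 : p 1 = γ R := by
    apply UpperHalfPlane.ext
    rw [hpdef, ppath_coe, hγ,
      show Real.sinh D * xrfun 1 = 0 by
        rw [xrfun_eq5 (by norm_num : (1:ℝ) ∈ Icc (4/5) 1)]; ring,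
      show gfun R D 1 = R by
        rw [gfun_eq5 hD hDR (by norm_num : (1:ℝ) ∈ Icc (4/5) 1)]; ring]
    simp [-Complex.ofReal_exp, mul_comm]
  have hdRR : dist (γ (-R)) (γ R) = 2*R := by
    rw [hdist, show -R - R = -(2*R) by ring, abs_neg, abs_of_nonneg (by linarith)]
  -- piece variation bounds
  have piece1 : eVariationOn p (Icc 0 (1/5)) ≤ ENNReal.ofReal ((5*(R-D)) * (1/5 - 0)) := by
    apply evar_le_of_lip _ _ _ _ (by norm_num) hRD0
    intro x hx y hy
    have hrexy : (p x).re = (p y).re := by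
      rw [hpdef, ppath_re, ppath_re, xrfun_eq1 hx, xrfun_eq1 hy]
    rw [dist_vert _ _ hrexy, hpdef, ppath_im, ppath_im, Real.log_exp, Real.log_exp,
      gfun_eq1 hD hDR hx, gfun_eq1 hD hDR hy, Real.dist_eq,
      show (-R + 5*(R-D)*x) - (-R + 5*(R-D)*y) = 5*(R-D)*(x-y) by ring, abs_mul,
      abs_of_nonneg hRD0]
  have piece5 : eVariationOn p (Icc (4/5) 1) ≤ ENNReal.ofReal ((5*(R-D)) * (1 - 4/5)) := by
    apply evar_le_of_lip _ _ _ _ (by norm_num) hRD0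
    intro x hx y hy
    have hrexy : (p x).re = (p y).re := by
      rw [hpdef, ppath_re, ppath_re, xrfun_eq5 hx, xrfun_eq5 hy]
    rw [dist_vert _ _ hrexy, hpdef, ppath_im, ppath_im, Real.log_exp, Real.log_exp,
      gfun_eq5 hD hDR hx, gfun_eq5 hD hDR hy, Real.dist_eq,
      show (D + 5*(R-D)*(x - 4/5)) - (D + 5*(R-D)*(y - 4/5)) = 5*(R-D)*(x-y) by ring, abs_mul,
      abs_of_nonneg hRD0]
  have piece3 : eVariationOn p (Icc (2/5) (3/5)) ≤ ENNReal.ofReal ((10*D) * (3/5 - 2/5)) := by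
    apply evar_le_of_lip _ _ _ _ (by norm_num) (by linarith)
    intro x hx y hy
    have hrexy : (p x).re = (p y).re := by
      rw [hpdef, ppath_re, ppath_re, xrfun_eq3 hx, xrfun_eq3 hy]
    rw [dist_vert _ _ hrexy, hpdef, ppath_im, ppath_im, Real.log_exp, Real.log_exp,
      gfun_eq3 hD hDR hx, gfun_eq3 hD hDR hy, Real.dist_eq,
      show (-D + 10*D*(x - 2/5)) - (-D + 10*D*(y - 2/5)) = 10*D*(x-y) by ring, abs_mul,
      abs_of_nonneg (by linarith : (0:ℝ) ≤ 10*D)]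
  have piece2 : eVariationOn p (Icc (1/5) (2/5)) ≤
      ENNReal.ofReal ((5*Real.sinh D*Real.exp D) * (2/5 - 1/5)) := by
    apply evar_le_of_lip _ _ _ _ (by norm_num) hXe
    intro x hx y hy
    have himxy : (p x).im = (p y).im := by
      rw [hpdef, ppath_im, ppath_im, gfun_eq2 hD hDR hx, gfun_eq2 hD hDR hy]
    refine le_trans (dist_horiz _ _ himxy) (le_of_eq ?_)
    rw [hpdef, ppath_re, ppath_re, ppath_im, gfun_eq2 hD hDR hx, xrfun_eq2 hx, xrfun_eq2 hy,
      Real.dist_eq,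
      show Real.sinh D*(5*x-1) - Real.sinh D*(5*y-1) = 5*Real.sinh D*(x-y) by ring, abs_mul,
      abs_of_nonneg (by linarith : (0:ℝ) ≤ 5*Real.sinh D),
      div_eq_iff (Real.exp_ne_zero _), Real.exp_neg]
    field_simp
  have piece4 : eVariationOn p (Icc (3/5) (4/5)) ≤
      ENNReal.ofReal ((5*Real.sinh D*Real.exp (-D)) * (4/5 - 3/5)) := by
    apply evar_le_of_lip _ _ _ _ (by norm_num) hXe'
    intro x hx y hy
    have himxy : (p x).im = (p y).im := by
      rw [hpdef, ppath_im, ppath_im, gfun_eq4 hD hDR hx, gfun_eq4 hD hDR hy]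
    refine le_trans (dist_horiz _ _ himxy) (le_of_eq ?_)
    rw [hpdef, ppath_re, ppath_re, ppath_im, gfun_eq4 hD hDR hx, xrfun_eq4 hx, xrfun_eq4 hy,
      Real.dist_eq,
      show Real.sinh D*(4-5*x) - Real.sinh D*(4-5*y) = 5*Real.sinh D*(y-x) by ring, abs_mul,
      abs_of_nonneg (by linarith : (0:ℝ) ≤ 5*Real.sinh D),
      div_eq_iff (Real.exp_ne_zero _), Real.exp_neg, abs_sub_comm y x]
    field_simp
  -- combine
  have E1 := eVariationOn.Icc_add_Icc p (s := univ) (show (0:ℝ) ≤ 1/5 by norm_num)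
    (show (1/5:ℝ) ≤ 1 by norm_num) (mem_univ _)
  have E2 := eVariationOn.Icc_add_Icc p (s := univ) (show (1/5:ℝ) ≤ 2/5 by norm_num)
    (show (2/5:ℝ) ≤ 1 by norm_num) (mem_univ _)
  have E3 := eVariationOn.Icc_add_Icc p (s := univ) (show (2/5:ℝ) ≤ 3/5 by norm_num)
    (show (3/5:ℝ) ≤ 1 by norm_num) (mem_univ _)
  have E4 := eVariationOn.Icc_add_Icc p (s := univ) (show (3/5:ℝ) ≤ 4/5 by norm_num)
    (show (4/5:ℝ) ≤ 1 by norm_num) (mem_univ _)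
  simp only [Set.univ_inter] at E1 E2 E3 E4
  have hvar : eVariationOn p (Icc 0 1) ≤ ENNReal.ofReal (3 * dist (γ (-R)) (γ R)) := by
    have hsum : eVariationOn p (Icc 0 1)
        ≤ ENNReal.ofReal ((5*(R-D)) * (1/5 - 0)) + (ENNReal.ofReal ((5*Real.sinh D*Real.exp D) * (2/5 - 1/5))
          + (ENNReal.ofReal ((10*D) * (3/5 - 2/5)) + (ENNReal.ofReal ((5*Real.sinh D*Real.exp (-D)) * (4/5 - 3/5))
          + ENNReal.ofReal ((5*(R-D)) * (1 - 4/5))))) := by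
      rw [← E1, ← E2, ← E3, ← E4]
      gcongr
    refine hsum.trans ?_
    rw [← ENNReal.ofReal_add (by positivity) (by positivity),
      ← ENNReal.ofReal_add (by positivity) (by positivity),
      ← ENNReal.ofReal_add (by nlinarith) (by positivity),
      ← ENNReal.ofReal_add (by nlinarith) (by nlinarith)]
    apply ENNReal.ofReal_le_ofReal
    rw [hdRR]
    have hc := Real.cosh_eq D
    nlinarith [Real.exp_pos D, Real.exp_pos (-D)]
  refine ⟨-R, R, p, by linarith, by linarith, by linarith,
    (continuous_ppath R D (Real.sinh D)).continuousOn, hp0, hp1, hvar, ?_⟩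
  intro u hu
  rcases le_total u (2/5) with h | h
  · have hg := gfun_le hD hDR h
    have h1 := log_im_le_dist (γ 0) (p u)
    rw [him 0, Real.exp_zero, Real.log_one, hpdef, ppath_im, Real.log_exp] at h1
    have h2 : D ≤ |0 - gfun R D u| := by
      rw [zero_sub, abs_neg]
      calc D ≤ -(gfun R D u) := by linarith
        _ ≤ |gfun R D u| := neg_le_abs _
    linarith
  · rcases le_total u (3/5) with h' | h'
    · have hgre : (p u).re = Real.sinh D := by
        rw [hpdef, ppath_re, xrfun_eq3 ⟨h, h'⟩, mul_one]
      have := arsinh_le_dist (p u) (γ 0) (hre 0) (by rw [him 0, Real.exp_zero]) hX0 hgre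
      rwa [Real.arsinh_sinh] at this
    · have hg := gfun_ge hD hDR h'
      have h1 := log_im_le_dist (γ 0) (p u)
      rw [him 0, Real.exp_zero, Real.log_one, hpdef, ppath_im, Real.log_exp] at h1
      have h2 : D ≤ |0 - gfun R D u| := by
        rw [zero_sub, abs_neg]
        calc D ≤ gfun R D u := hg
          _ ≤ |gfun R D u| := le_abs_self _
      linarith

end Stmt15

/-- In the hyperbolic plane (upper half-plane model, isometric to the
Poincaré disk via a Cayley transform sending the origin to i and the horizontal
diameter to the imaginary axis), let γ(s) = i·e^s be the unit-speed geodesic through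
the point corresponding to the origin. Then γ is a geodesic; for every D > 0 there
is a path p with endpoints a = γ(s), b = γ(s') on γ with arclength
‖p‖ ≤ 3·d(a,b) staying at distance ≥ D from γ(0); and consequently γ fails
Property 5. -/
theorem stmt_15 :
    ∀ γ : ℝ → UpperHalfPlane,
      (∀ s : ℝ, (γ s : ℂ) = Complex.I * Real.exp s) →
      (∀ s s' : ℝ, dist (γ s) (γ s') = |s - s'|) ∧
      (∀ D : ℝ, 0 < D → ∃ (s s' : ℝ) (p : ℝ → UpperHalfPlane), s ≤ s' ∧
        ContinuousOn p (Set.Icc 0 1) ∧ p 0 = γ s ∧ p 1 = γ s' ∧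
        eVariationOn p (Set.Icc 0 1) ≤ ENNReal.ofReal (3 * dist (γ s) (γ s')) ∧
        ∀ u ∈ Set.Icc (0:ℝ) 1, D ≤ dist (γ 0) (p u)) ∧
      ¬ (∀ C : ℝ, 1 ≤ C → ∃ K : ℝ, 0 ≤ K ∧
          ∀ s s' : ℝ, s ≤ s' → ∀ p : ℝ → UpperHalfPlane,
            ContinuousOn p (Set.Icc 0 1) → p 0 = γ s → p 1 = γ s' →
            eVariationOn p (Set.Icc 0 1) ≤
              ENNReal.ofReal (C * dist (γ s) (γ s')) →
            ∀ u ∈ Set.Icc s s', ∃ v ∈ Set.Icc (0:ℝ) 1, dist (γ u) (p v) ≤ K) := by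
  intro γ hγ
  have hre : ∀ s, (γ s).re = 0 := fun s => by
    rw [← UpperHalfPlane.coe_re, hγ s]; simp [-Complex.ofReal_exp]
  have him : ∀ s, (γ s).im = Real.exp s := fun s => by
    rw [← UpperHalfPlane.coe_im, hγ s]; simp [-Complex.ofReal_exp]
  have hdist : ∀ a b : ℝ, dist (γ a) (γ b) = |a - b| := fun a b => by
    rw [UpperHalfPlane.dist_of_re_eq ((hre a).trans (hre b).symm), him, him, Real.log_exp,
      Real.log_exp, Real.dist_eq]
  refine ⟨hdist, ?_, ?_⟩
  · intro D hD
    obtain ⟨s, s', p, hs0, h0s, hss, hc, h0, h1, hv, hf⟩ := Stmt15.key γ hγ D hD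
    exact ⟨s, s', p, hss, hc, h0, h1, hv, hf⟩
  · intro H
    obtain ⟨K, hK0, hK⟩ := H 3 (by norm_num)
    obtain ⟨s, s', p, hs0, h0s, hss, hc, h0, h1, hv, hf⟩ :=
      Stmt15.key γ hγ (K + 1) (by linarith)
    obtain ⟨v, hvmem, hdv⟩ := hK s s' hss p hc h0 h1 hv 0 ⟨hs0, h0s⟩
    have := hf v hvmem
    linarith
end

section
/- Let X, Y be metric spaces and f : X → Y a Q-Lipschitz map that is proper in the strong sense: for every M_Y ≥ 0 there is M_X ≥ 0 such that d_Y(f(x), f(x')) ≤ M_Y implies d_X(x, x') ≤ M_X. Suppose H ⊆ X is a subset such that f restricted to H is a Q-quasi-isometric embedding and a point z ∈ X satisfies d_Y(f(z), y₀) ≤ K for some point y₀ with d_Y(f(a), y₀) ≥ (1/3)·d_Y(f(a), f(b)) and d_Y(y₀, f(b)) ≥ (1/3)·d_Y(f(a), f(b)), where a, b ∈ H. Then, provided d_X(a,b) ≥ 6Q(K + Q + Q²), we have d_X(a, z) ≥ d_X(a,b)/(6Q²). -/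
/-- Let f : X → Y be Q-Lipschitz and metrically proper, restricting to
a Q-quasi-isometric embedding on H ⊆ X. If z ∈ X maps K-close to a point y₀ lying in
the middle third (in Y) between f(a) and f(b) with a, b ∈ H, and
d(a,b) ≥ 6Q(K + Q + Q²), then d(a,z) ≥ d(a,b)/(6Q²). -/
theorem stmt_16 {X Y : Type*} [MetricSpace X] [MetricSpace Y]
    (f : X → Y) (Q : ℝ) (hQ : 1 ≤ Q)
    (hlip : ∀ x x' : X, dist (f x) (f x') ≤ Q * dist x x')
    (hproper : ∀ MY : ℝ, 0 ≤ MY → ∃ MX : ℝ, 0 ≤ MX ∧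
      ∀ x x' : X, dist (f x) (f x') ≤ MY → dist x x' ≤ MX)
    (H : Set X)
    (hqie : ∀ u ∈ H, ∀ v ∈ H,
      Q⁻¹ * dist u v - Q ≤ dist (f u) (f v) ∧ dist (f u) (f v) ≤ Q * dist u v + Q)
    (a b : X) (ha : a ∈ H) (hb : b ∈ H) (z : X) (y₀ : Y) (K : ℝ) (hK : 0 ≤ K)
    (hz : dist (f z) y₀ ≤ K)
    (h1 : dist (f a) y₀ ≥ (1/3) * dist (f a) (f b))
    (h2 : dist y₀ (f b) ≥ (1/3) * dist (f a) (f b))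
    (hd : dist a b ≥ 6 * Q * (K + Q + Q ^ 2)) :
    dist a z ≥ dist a b / (6 * Q ^ 2) := by
  have hQ0 : (0:ℝ) < Q := lt_of_lt_of_le one_pos hQ
  have hinv : Q * Q⁻¹ = 1 := mul_inv_cancel₀ (ne_of_gt hQ0)
  have hB := (hqie a ha b hb).1
  have hC := hlip a z
  have hT : dist (f a) y₀ ≤ dist (f a) (f z) + dist (f z) y₀ := dist_triangle _ _ _
  rw [ge_iff_le, div_le_iff₀ (by positivity)]
  nlinarith [dist_nonneg (x := a) (y := z), dist_nonneg (x := a) (y := b),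
    mul_le_mul_of_nonneg_left hC (le_of_lt hQ0), sq_nonneg Q,
    mul_le_mul_of_nonneg_left hB (le_of_lt hQ0)]
end
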